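/- No finite Kripke structure satisfies the Cycle-CTL* formula A G ¬E^cycle ⊤. That is, if K = (AP, W, R, L, w_I) is a Kripke structure with W finite, then K, w_I ⊭ A G ¬E^cycle ⊤; equivalently, every finite Kripke structure has a world reachable along some path from w_I at which a cycle starts. -/
import Mathlib


namespace CycleCTL

universe u v

/-- A Kripke structure over a set `AP` of atomic propositions. -/
structure Kripke (AP : Type) : Type (u + 1) where
  World : Type u
  init : World
  R : World → World → Prop
  label : World → Set AP
  serial : ∀ w, ∃ v, R w v

variable {AP : Type}

/-- An (infinite) path of a Kripke structure. -/
def IsPath (K : Kripke.{u} AP) (π : ℕ → K.World) : Prop :=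
  ∀ i, K.R (π i) (π (i + 1))

/-- A cycle: a path visiting its first world infinitely often. -/
def IsCycle (K : Kripke.{u} AP) (π : ℕ → K.World) : Prop :=
  IsPath K π ∧ ∀ i, ∃ j, i < j ∧ π j = π 0

mutual
  /-- State formulas of Cycle-CTL*. -/
  inductive StateForm (AP : Type) : Type where
    | atom : AP → StateForm AP
    | not  : StateForm AP → StateForm AP
    | and  : StateForm AP → StateForm AP → StateForm AP
    | or   : StateForm AP → StateForm AP → StateForm AP
    | E    : PathForm AP → StateForm AP
    | A    : PathForm AP → StateForm AP
    | Ec   : PathForm AP → StateForm AP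
    | Ac   : PathForm AP → StateForm AP
  /-- Path formulas of Cycle-CTL*. -/
  inductive PathForm (AP : Type) : Type where
    | state : StateForm AP → PathForm AP
    | not   : PathForm AP → PathForm AP
    | and   : PathForm AP → PathForm AP → PathForm AP
    | or    : PathForm AP → PathForm AP → PathForm AP
    | next  : PathForm AP → PathForm AP
    | untl  : PathForm AP → PathForm AP → PathForm AP
end

mutual
  /-- Satisfaction of a state formula at a world. -/
  def SatS (K : Kripke.{u} AP) : K.World → StateForm AP → Prop
    | w, .atom p => p ∈ K.label w
    | w, .not φ => ¬ SatS K w φ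
    | w, .and φ₁ φ₂ => SatS K w φ₁ ∧ SatS K w φ₂
    | w, .or φ₁ φ₂ => SatS K w φ₁ ∨ SatS K w φ₂
    | w, .E ψ => ∃ π, IsPath K π ∧ π 0 = w ∧ SatP K π 0 ψ
    | w, .A ψ => ∀ π, IsPath K π → π 0 = w → SatP K π 0 ψ
    | w, .Ec ψ => ∃ π, IsCycle K π ∧ π 0 = w ∧ SatP K π 0 ψ
    | w, .Ac ψ => ∀ π, IsCycle K π → π 0 = w → SatP K π 0 ψ
  /-- Satisfaction of a path formula on a path at a position. -/
  def SatP (K : Kripke.{u} AP) : (ℕ → K.World) → ℕ → PathForm AP → Prop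
    | π, i, .state φ => SatS K (π i) φ
    | π, i, .not ψ => ¬ SatP K π i ψ
    | π, i, .and ψ₁ ψ₂ => SatP K π i ψ₁ ∧ SatP K π i ψ₂
    | π, i, .or ψ₁ ψ₂ => SatP K π i ψ₁ ∨ SatP K π i ψ₂
    | π, i, .next ψ => SatP K π (i + 1) ψ
    | π, i, .untl ψ₁ ψ₂ => ∃ k, SatP K π (i + k) ψ₂ ∧ ∀ j < k, SatP K π (i + j) ψ₁
end

/-- `K ⊨ φ` : satisfaction at the initial world. -/
def Sat (K : Kripke.{u} AP) (φ : StateForm AP) : Prop := SatS K K.init φ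

/-- `⊤` as a path formula, abbreviating `p ∨ ¬p`. -/
def topP (p : AP) : PathForm AP := .or (.state (.atom p)) (.not (.state (.atom p)))

/-- `F ψ` abbreviates `⊤ U ψ`. -/
def FP (p : AP) (ψ : PathForm AP) : PathForm AP := .untl (topP p) ψ

/-- `G ψ` abbreviates `¬(⊤ U ¬ψ)`. -/
def GP (p : AP) (ψ : PathForm AP) : PathForm AP := .not (FP p (.not ψ))


/-- No finite Kripke structure satisfies `A G ¬ E^cycle ⊤`. -/
theorem stmt0 {AP : Type} (p : AP) (K : Kripke.{u} AP) (hfin : Finite K.World) :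
    ¬ Sat K (.A (GP p (.state (.not (.Ec (topP p)))))) := by
  classical
  -- Build a path from init
  let π : ℕ → K.World := fun n => Nat.rec K.init (fun _ w => (K.serial w).choose) n
  have hπ : IsPath K π := fun n => (K.serial (π n)).choose_spec
  have hπ0 : π 0 = K.init := rfl
  -- pigeonhole: some repetition
  have : ¬ Function.Injective π := by
    intro hinj
    have := Finite.of_injective π hinj; exact not_finite ℕ
  obtain ⟨a, b, hab, hne⟩ : ∃ a b, π a = π b ∧ a ≠ b := by
    simpa [Function.Injective, not_forall] using this
  -- wlog a < b
  obtain ⟨i, j, hij, heq⟩ : ∃ i j, i < j ∧ π i = π j := by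
    rcases lt_or_gt_of_ne hne with h | h
    · exact ⟨a, b, h, hab⟩
    · exact ⟨b, a, h, hab.symm⟩
  set d := j - i with hd
  have hdpos : 0 < d := Nat.sub_pos_of_lt hij
  have hjd : i + d = j := Nat.add_sub_cancel' hij.le
  -- the cycle
  let σ : ℕ → K.World := fun n => π (i + n % d)
  have hσpath : IsPath K σ := by
    intro n
    set r := n % d with hr
    have hrd : r < d := Nat.mod_lt _ hdpos
    have hstep : K.R (π (i + r)) (π (i + r + 1)) := hπ (i + r)
    have hsucc : (n + 1) % d = (r + 1) % d := by
      rw [hr]; exact (Nat.mod_add_mod n d 1).symm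
    show K.R (π (i + n % d)) (π (i + (n + 1) % d))
    rcases Nat.lt_or_ge (r + 1) d with h | h
    · rw [← hr, hsucc, Nat.mod_eq_of_lt h]
      exact hstep
    · have hrd1 : r + 1 = d := le_antisymm (Nat.succ_le_of_lt hrd) h
      rw [← hr, hsucc, hrd1, Nat.mod_self]
      have : π (i + r + 1) = π (i + 0) := by
        rw [Nat.add_assoc, hrd1, hjd, Nat.add_zero, heq]
      rwa [this] at hstep
  have hσcyc : IsCycle K σ := by
    refine ⟨hσpath, fun m => ⟨(m + 1) * d, ?_, ?_⟩⟩
    · calc m < m + 1 := Nat.lt_succ_self m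
        _ ≤ (m + 1) * d := Nat.le_mul_of_pos_right _ hdpos
    · show π (i + (m + 1) * d % d) = π (i + 0 % d)
      rw [Nat.mul_mod_left, Nat.zero_mod]
  have hσ0 : σ 0 = π i := by show π (i + 0 % d) = π i; simp
  -- π i satisfies Ec ⊤
  have hEc : SatS K (π i) (.Ec (topP p)) := by
    refine ⟨σ, hσcyc, hσ0, ?_⟩
    show SatP K σ 0 (.or (.state (.atom p)) (.not (.state (.atom p))))
    show SatS K (σ 0) (.atom p) ∨ ¬ SatS K (σ 0) (.atom p)
    exact em _
  -- conclude
  intro hsat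
  have h1 : SatP K π 0 (GP p (.state (.not (.Ec (topP p))))) := hsat π hπ hπ0
  apply h1
  refine ⟨i, ?_, fun j' _ => ?_⟩
  · show ¬ SatS K (π (0 + i)) (.not (.Ec (topP p)))
    rw [Nat.zero_add]
    exact not_not_intro hEc
  · show SatS K (π (0 + j')) (.atom p) ∨ ¬ SatS K (π (0 + j')) (.atom p)
    exact em _

end CycleCTL
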